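/- Let T = (T_1,…,T_n) be an n-tuple of bounded operators on a Hilbert space H with Σ_{|α|≥1} a_α T_α T_α* ≤ I (WOT convergence), and let Φ_{f,T}(X) = Σ_{|α|≥1} a_α T_α X T_α*. Then the sequence Φ_{f,T}^m(I) is decreasing in the positive operator order, Q := SOT-lim_m Φ_{f,T}^m(I) exists, and Σ_{β∈F_n^+} b_β T_β (I − Φ_{f,T}(I)) T_β* = I − Q in the strong operator topology. -/

import Mathlib

set_option linter.unusedSectionVars false
set_option linter.unnecessarySimpa false
set_option maxHeartbeats 1000000


open Filter Topology
open scoped ComplexConjugate ENNReal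

namespace NCDomain

/-- Words in the free monoid `F_n^+` on `n` generators. -/
abbrev Word (n : ℕ) := FreeMonoid (Fin n)

instance {n : ℕ} : DecidableEq (Word n) :=
  inferInstanceAs (DecidableEq (List (Fin n)))

/-- The length `|α|` of a word. -/
def wordLen {n : ℕ} (α : Word n) : ℕ := FreeMonoid.length α

/-- The coefficients `b_α`, defined by `b_{g_0} = 1` and, for `|α| ≥ 1`,
`b_α = Σ_{j=1}^{|α|} Σ_{γ_1⋯γ_j = α, |γ_i| ≥ 1} a_{γ_1}⋯a_{γ_j}`, the sum running over
all ordered factorizations of `α` into nonempty words. -/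
noncomputable def bCoeff {n : ℕ} (a : Word n → ℝ) (α : Word n) : ℝ :=
  if α = 1 then 1
  else ∑' L : {L : List (Word n) // L.prod = α ∧ ∀ w ∈ L, w ≠ 1}, (L.1.map a).prod

/-- `f = Σ_{|α|≥1} a_α X_α` is a positive regular free holomorphic function:
`a_{g_0} = 0`, `a_α ≥ 0`, `a_{g_i} > 0`, and
`limsup_{k→∞} (Σ_{|α|=k} |a_α|²)^{1/(2k)} < ∞`. -/
def PosRegular {n : ℕ} (a : Word n → ℝ) : Prop :=
  a 1 = 0 ∧ (∀ α, 0 ≤ a α) ∧ (∀ i : Fin n, 0 < a (FreeMonoid.of i)) ∧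
    ∃ C : ℝ, ∀ᶠ k in atTop,
      (∑' α : {β : Word n // wordLen β = k}, (a α.1) ^ 2) ≤ C ^ (2 * k)

/-- For a tuple `T` of operators and a word `α = g_{i_1}⋯g_{i_k}`,
the product `T_α = T_{i_1}⋯T_{i_k}` (and `T_{g_0} = I`). -/
noncomputable def opWord {n : ℕ} {H : Type*} [NormedAddCommGroup H] [NormedSpace ℂ H]
    (T : Fin n → H →L[ℂ] H) (α : Word n) : H →L[ℂ] H :=
  ((FreeMonoid.toList α).map T).prod

/-- `Φ` is the completely positive map `Φ(X) = Σ_{|α|≥1} c_α T_α X T_α*`, the series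
converging in the weak operator topology. -/
def IsPhi {n : ℕ} {H : Type*} [NormedAddCommGroup H] [InnerProductSpace ℂ H] [CompleteSpace H]
    (c : Word n → ℝ) (T : Fin n → H →L[ℂ] H) (Φ : (H →L[ℂ] H) → (H →L[ℂ] H)) : Prop :=
  ∀ (X : H →L[ℂ] H) (x y : H),
    HasSum (fun α : {β : Word n // β ≠ 1} =>
      (c α.1 : ℂ) * (inner ℂ (opWord T α.1 (X ((opWord T α.1).adjoint x))) y : ℂ))
      ((inner ℂ (Φ X x) y : ℂ))

-- ## auxiliary lemmas

section Aux

variable {n : ℕ} {H : Type*} [NormedAddCommGroup H] [InnerProductSpace ℂ H] [CompleteSpace H]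

local notation "⟪" x ", " y "⟫" => @inner ℂ _ _ x y

lemma opWord_one (T : Fin n → H →L[ℂ] H) : opWord T (1 : Word n) = 1 := rfl

lemma opWord_mul (T : Fin n → H →L[ℂ] H) (α β : Word n) :
    opWord T (α * β) = opWord T α * opWord T β := by
  unfold opWord
  rw [FreeMonoid.toList_mul, List.map_append, List.prod_append]

lemma adjoint_opWord_mul (T : Fin n → H →L[ℂ] H) (α β : Word n) (x : H) :
    (opWord T (α * β)).adjoint x = (opWord T β).adjoint ((opWord T α).adjoint x) := by
  rw [opWord_mul, ContinuousLinearMap.mul_def, ContinuousLinearMap.adjoint_comp]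
  rfl

variable {a : Word n → ℝ} {T : Fin n → H →L[ℂ] H} {Φ : (H →L[ℂ] H) → (H →L[ℂ] H)}


lemma phi_hasSum (hΦ : IsPhi a T Φ) (X : H →L[ℂ] H) (x y : H) :
    HasSum (fun α : {β : Word n // β ≠ 1} =>
      (a α.1 : ℂ) * ⟪X ((opWord T α.1).adjoint x), (opWord T α.1).adjoint y⟫)
      ⟪Φ X x, y⟫ := by
  have h := hΦ X x y
  have e : (fun α : {β : Word n // β ≠ 1} =>
      (a α.1 : ℂ) * ⟪opWord T α.1 (X ((opWord T α.1).adjoint x)), y⟫)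
      = fun α : {β : Word n // β ≠ 1} =>
      (a α.1 : ℂ) * ⟪X ((opWord T α.1).adjoint x), (opWord T α.1).adjoint y⟫ := by
    funext α
    rw [ContinuousLinearMap.adjoint_inner_right]
  exact e ▸ h

lemma phi_sub (hΦ : IsPhi a T Φ) (X Y : H →L[ℂ] H) : Φ (X - Y) = Φ X - Φ Y := by
  ext x
  refine ext_inner_right ℂ fun y => ?_
  have h3 := phi_hasSum hΦ (X - Y) x y
  have h4 := (phi_hasSum hΦ X x y).sub (phi_hasSum hΦ Y x y)
  have e : (fun α : {β : Word n // β ≠ 1} =>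
        (a α.1 : ℂ) * ⟪(X - Y) ((opWord T α.1).adjoint x), (opWord T α.1).adjoint y⟫)
      = fun α : {β : Word n // β ≠ 1} =>
        (a α.1 : ℂ) * ⟪X ((opWord T α.1).adjoint x), (opWord T α.1).adjoint y⟫
          - (a α.1 : ℂ) * ⟪Y ((opWord T α.1).adjoint x), (opWord T α.1).adjoint y⟫ := by
    funext α
    rw [ContinuousLinearMap.sub_apply, inner_sub_left, mul_sub]
  rw [e] at h3
  have := h3.unique h4
  rw [ContinuousLinearMap.sub_apply, inner_sub_left, this]

lemma phi_isPositive (hΦ : IsPhi a T Φ) (ha : ∀ α, 0 ≤ a α) {X : H →L[ℂ] H}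
    (hX : X.IsPositive) : (Φ X).IsPositive := by
  have hsym := hX.1
  constructor
  · intro x y
    show ⟪(Φ X) x, y⟫ = ⟪x, (Φ X) y⟫
    have h2 : HasSum (fun α : {β : Word n // β ≠ 1} =>
        conj ((a α.1 : ℂ) * ⟪X ((opWord T α.1).adjoint y), (opWord T α.1).adjoint x⟫))
        (conj ⟪(Φ X) y, x⟫) := by
      rw [Complex.hasSum_conj]
      simpa using phi_hasSum hΦ X y x
    have e : (fun α : {β : Word n // β ≠ 1} =>
        conj ((a α.1 : ℂ) * ⟪X ((opWord T α.1).adjoint y), (opWord T α.1).adjoint x⟫))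
        = fun α : {β : Word n // β ≠ 1} =>
        (a α.1 : ℂ) * ⟪X ((opWord T α.1).adjoint x), (opWord T α.1).adjoint y⟫ := by
      funext α
      rw [map_mul, Complex.conj_ofReal, inner_conj_symm]
      congr 1
      exact (hsym _ _).symm
    rw [e] at h2
    have key := (phi_hasSum hΦ X x y).unique h2
    rw [key]
    exact inner_conj_symm _ _
  · intro x
    have hre := Complex.hasSum_re (phi_hasSum hΦ X x x)
    refine hre.nonneg fun α => ?_
    rw [Complex.re_ofReal_mul]
    exact mul_nonneg (ha _) (hX.2 _)

lemma phi_mono (hΦ : IsPhi a T Φ) (ha : ∀ α, 0 ≤ a α) {X Y : H →L[ℂ] H}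
    (hXY : (X - Y).IsPositive) : (Φ X - Φ Y).IsPositive := by
  rw [← phi_sub hΦ]
  exact phi_isPositive hΦ ha hXY

lemma cs_bound {D : H →L[ℂ] H} (hD : D.IsPositive)
    (hle : ∀ y : H, Complex.re ⟪D y, y⟫ ≤ ‖y‖ ^ 2) (x : H) :
    ‖D x‖ ^ 2 ≤ Complex.re ⟪D x, x⟫ := by
  by_cases hx : D x = 0
  · rw [hx]
    simpa using hD.2 x
  have hsym := hD.1
  have hquad : ∀ t : ℝ, 0 ≤ Complex.re ⟪D (D x), D x⟫ * (t * t) + (2 * ‖D x‖ ^ 2) * t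
      + Complex.re ⟪D x, x⟫ := by
    intro t
    have hDDxx : ⟪D (D x), x⟫ = ⟪D x, D x⟫ := hsym (D x) x
    have h0 : (0 : ℝ) ≤ Complex.re ⟪D (x + t • D x), x + t • D x⟫ := hD.2 _
    have hmap : D (x + t • D x) = D x + t • D (D x) := by
      rw [map_add, ContinuousLinearMap.map_smul_of_tower]
    rw [hmap] at h0
    simp only [← Complex.coe_smul, inner_add_left, inner_add_right, inner_smul_left,
      inner_smul_right, Complex.conj_ofReal, Complex.add_re, Complex.re_ofReal_mul, hDDxx,
      inner_self_eq_norm_sq] at h0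
    have hss : (⟪D x, D x⟫).re = ‖D x‖ ^ 2 := by
      simpa using inner_self_eq_norm_sq (𝕜 := ℂ) (x := D x)
    rw [hss] at h0
    nlinarith [h0]
  have hdisc := discrim_le_zero hquad
  rw [discrim] at hdisc
  have hDDx : Complex.re ⟪D (D x), D x⟫ ≤ ‖D x‖ ^ 2 := hle (D x)
  have hxx : (0 : ℝ) ≤ Complex.re ⟪D x, x⟫ := hD.2 x
  have hnorm : (0 : ℝ) < ‖D x‖ := norm_pos_iff.mpr hx
  nlinarith [mul_le_mul_of_nonneg_right hDDx hxx, pow_pos hnorm 2]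

end Aux

section Comb

variable {n : ℕ}

noncomputable def cfun (A : Word n → ℝ≥0∞) : ℕ → Word n → ℝ≥0∞
  | 0, γ => if γ = 1 then 1 else 0
  | m + 1, δ => ∑' p : Word n × Word n, if p.1 * p.2 = δ then A p.1 * cfun A m p.2 else 0

lemma wordLen_eq_zero {w : Word n} : wordLen w = 0 ↔ w = 1 := FreeMonoid.length_eq_zero

lemma wordLen_pos {w : Word n} (hw : w ≠ 1) : 0 < wordLen w :=
  Nat.pos_of_ne_zero fun h => hw (wordLen_eq_zero.mp h)

lemma prod_wordLen (L : List (Word n)) : wordLen L.prod = (L.map wordLen).sum := by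
  induction L with
  | nil => rfl
  | cons w t ih =>
    rw [List.prod_cons, List.map_cons, List.sum_cons, ← ih]
    exact FreeMonoid.length_mul w t.prod

lemma eq_of_len_prod : ∀ L1 L2 : List (Word n),
    L1.map wordLen = L2.map wordLen → L1.prod = L2.prod → L1 = L2 := by
  intro L1
  induction L1 with
  | nil =>
    intro L2 h _
    exact (List.map_eq_nil_iff.mp h.symm).symm
  | cons w1 t1 ih =>
    intro L2 h hp
    cases L2 with
    | nil => simp at h
    | cons w2 t2 =>
      simp only [List.map_cons, List.cons.injEq] at h
      obtain ⟨hlen, htail⟩ := h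
      simp only [List.prod_cons] at hp
      have hp' := congrArg FreeMonoid.toList hp
      rw [FreeMonoid.toList_mul, FreeMonoid.toList_mul] at hp'
      obtain ⟨hw, ht⟩ := List.append_inj hp' hlen
      have hw' : w1 = w2 := FreeMonoid.toList.injective hw
      have ht' : t1.prod = t2.prod := FreeMonoid.toList.injective ht
      rw [hw', ih t2 htail ht']

lemma fact_finite (γ : Word n) :
    Finite {L : List (Word n) // L.prod = γ ∧ ∀ w ∈ L, w ≠ 1} := by
  let f : {L : List (Word n) // L.prod = γ ∧ ∀ w ∈ L, w ≠ 1} → Composition (wordLen γ) :=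
    fun L =>
    { blocks := L.1.map wordLen
      blocks_pos := by
        intro i hi
        obtain ⟨w, hw, rfl⟩ := List.mem_map.mp hi
        exact wordLen_pos (L.2.2 w hw)
      blocks_sum := by rw [← prod_wordLen, L.2.1] }
  refine Finite.of_injective f fun L1 L2 h => ?_
  have hb : L1.1.map wordLen = L2.1.map wordLen := congrArg Composition.blocks h
  exact Subtype.ext (eq_of_len_prod _ _ hb (by rw [L1.2.1, L2.2.1]))

lemma cfun_list (A : Word n → ℝ≥0∞) (m : ℕ) : ∀ γ : Word n,
    cfun A m γ = ∑' L : List (Word n),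
      if L.length = m ∧ L.prod = γ then (L.map A).prod else 0 := by
  induction m with
  | zero =>
    intro γ
    rw [cfun, tsum_eq_single ([] : List (Word n))]
    · simp [eq_comm]
    · intro L hL
      rw [if_neg]
      rintro ⟨h1, -⟩
      exact hL (List.length_eq_zero_iff.mp h1)
  | succ m ih =>
    intro δ
    have hstep : ∀ p : Word n × List (Word n),
        (if (p.1 :: p.2).length = m + 1 ∧ (p.1 :: p.2).prod = δ
          then ((p.1 :: p.2).map A).prod else 0)
        = ∑' γ : Word n, if p.1 * γ = δ then
            (if p.2.length = m ∧ p.2.prod = γ then A p.1 * (p.2.map A).prod else 0) else 0 := by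
      rintro ⟨w, L'⟩
      have hz : ∀ γ : Word n, γ ≠ L'.prod → (if w * γ = δ then
            (if L'.length = m ∧ L'.prod = γ then A w * (L'.map A).prod else 0) else 0) = 0 := by
        intro γ hγ
        have hne : ¬(L'.length = m ∧ L'.prod = γ) := fun h => hγ h.2.symm
        simp [hne]
      rw [tsum_eq_single L'.prod hz]
      simp only [List.length_cons, List.prod_cons, List.map_cons]
      by_cases h1 : w * L'.prod = δ <;> by_cases h2 : L'.length = m <;> simp [h1, h2]
    calc cfun A (m + 1) δ
        = ∑' p : Word n × Word n, if p.1 * p.2 = δ then A p.1 * cfun A m p.2 else 0 := by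
          rw [cfun]
      _ = ∑' (w : Word n) (γ : Word n), if w * γ = δ then A w * cfun A m γ else 0 :=
          ENNReal.tsum_prod (f := fun w γ => if w * γ = δ then A w * cfun A m γ else 0)
      _ = ∑' (w : Word n) (γ : Word n), ∑' L' : List (Word n), if w * γ = δ then
            (if L'.length = m ∧ L'.prod = γ then A w * (L'.map A).prod else 0) else 0 := by
          refine tsum_congr fun w => tsum_congr fun γ => ?_
          by_cases h : w * γ = δ
          · rw [if_pos h, ih γ, ← ENNReal.tsum_mul_left]
            refine tsum_congr fun L' => ?_
            rw [if_pos h, mul_ite, mul_zero]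
          · simp [h]
      _ = ∑' (w : Word n) (L' : List (Word n)), ∑' γ : Word n, if w * γ = δ then
            (if L'.length = m ∧ L'.prod = γ then A w * (L'.map A).prod else 0) else 0 :=
          tsum_congr fun w => ENNReal.tsum_comm (f := fun (γ : Word n) (L' : List (Word n)) => if w * γ = δ then
            (if L'.length = m ∧ L'.prod = γ then A w * (L'.map A).prod else 0) else 0)
      _ = ∑' (p : Word n × List (Word n)), ∑' γ : Word n, if p.1 * γ = δ then
            (if p.2.length = m ∧ p.2.prod = γ then A p.1 * (p.2.map A).prod else 0) else 0 :=
          (ENNReal.tsum_prod (f := fun (w : Word n) (L' : List (Word n)) => ∑' γ : Word n, if w * γ = δ then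
            (if L'.length = m ∧ L'.prod = γ then A w * (L'.map A).prod else 0) else 0)).symm
      _ = ∑' (p : Word n × List (Word n)),
            (if (p.1 :: p.2).length = m + 1 ∧ (p.1 :: p.2).prod = δ
              then ((p.1 :: p.2).map A).prod else 0) :=
          tsum_congr fun p => (hstep p).symm
      _ = ∑' L : List (Word n), if L.length = m + 1 ∧ L.prod = δ then (L.map A).prod else 0 := by
          have hinj : Function.Injective (fun p : Word n × List (Word n) => p.1 :: p.2) := by
            intro p q h
            cases p; cases q
            simpa [Prod.ext_iff] using h
          have hsupp : Function.support (fun L : List (Word n) =>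
              if L.length = m + 1 ∧ L.prod = δ then (L.map A).prod else 0)
              ⊆ Set.range (fun p : Word n × List (Word n) => p.1 :: p.2) := by
            intro L hL
            rcases L with _ | ⟨w, L'⟩
            · simp at hL
            · exact ⟨(w, L'), rfl⟩
          exact hinj.tsum_eq (f := fun L : List (Word n) =>
            if L.length = m + 1 ∧ L.prod = δ then (L.map A).prod else 0) hsupp

lemma tsum_cfun_eq (A : Word n → ℝ≥0∞) (hA1 : A 1 = 0) (γ : Word n) :
    ∑' m : ℕ, cfun A m γ
      = ∑' L : {L : List (Word n) // L.prod = γ ∧ ∀ w ∈ L, w ≠ 1}, (L.1.map A).prod := by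
  have h1 : ∑' m : ℕ, cfun A m γ
      = ∑' L : List (Word n), if L.prod = γ then (L.map A).prod else 0 := by
    simp only [fun m => cfun_list A m γ]
    rw [ENNReal.tsum_comm (f := fun (m : ℕ) (L : List (Word n)) =>
      if L.length = m ∧ L.prod = γ then (L.map A).prod else 0)]
    refine tsum_congr fun L => ?_
    rw [tsum_eq_single L.length]
    · simp
    · intro m hm
      rw [if_neg]
      rintro ⟨h, -⟩
      exact hm h.symm
  rw [h1]
  have h2 : ∀ L : List (Word n), (if L.prod = γ then (L.map A).prod else 0)
      = Set.indicator {L : List (Word n) | L.prod = γ ∧ ∀ w ∈ L, w ≠ 1}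
          (fun L => (L.map A).prod) L := by
    intro L
    rw [Set.indicator_apply]
    by_cases hp : L.prod = γ
    · by_cases hw : ∀ w ∈ L, w ≠ 1
      · have hmem : L ∈ {L : List (Word n) | L.prod = γ ∧ ∀ w ∈ L, w ≠ 1} := ⟨hp, hw⟩
        rw [if_pos hp, if_pos hmem]
      · push_neg at hw
        obtain ⟨w, hwL, hw1⟩ := hw
        have hmem : (0 : ℝ≥0∞) ∈ L.map A := by
          rw [← hA1, ← hw1]
          exact List.mem_map_of_mem (f := A) hwL
        have hzero : (L.map A).prod = 0 := List.prod_eq_zero hmem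
        have hnotmem : L ∉ {L : List (Word n) | L.prod = γ ∧ ∀ w ∈ L, w ≠ 1} := by
          rintro ⟨-, h⟩
          exact h w hwL hw1
        rw [if_pos hp, if_neg hnotmem, hzero]
    · have hnotmem : L ∉ {L : List (Word n) | L.prod = γ ∧ ∀ w ∈ L, w ≠ 1} := by
        rintro ⟨h, -⟩
        exact hp h
      rw [if_neg hp, if_neg hnotmem]
  rw [tsum_congr h2, ← tsum_subtype]
  rfl

lemma ofReal_list_prod (a : Word n → ℝ) (ha : ∀ α, 0 ≤ a α) (L : List (Word n)) :
    ENNReal.ofReal ((L.map a).prod) = (L.map fun α => ENNReal.ofReal (a α)).prod := by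
  induction L with
  | nil => simp
  | cons w t ih =>
    simp only [List.map_cons, List.prod_cons]
    rw [ENNReal.ofReal_mul (ha w), ih]

lemma bCoeff_nonneg (a : Word n → ℝ) (ha : ∀ α, 0 ≤ a α) (γ : Word n) : 0 ≤ bCoeff a γ := by
  unfold bCoeff
  split
  · exact zero_le_one
  · refine tsum_nonneg fun L => List.prod_nonneg ?_
    intro y hy
    obtain ⟨α, -, rfl⟩ := List.mem_map.mp hy
    exact ha α

lemma mul_eq_one_word {u v : Word n} (h : u * v = 1) : u = 1 := by
  have := congrArg wordLen h
  rw [wordLen] at this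
  rw [FreeMonoid.length_mul] at this
  exact wordLen_eq_zero.mp (Nat.eq_zero_of_add_eq_zero_right this)

lemma ofReal_bCoeff (a : Word n → ℝ) (ha : ∀ α, 0 ≤ a α) (ha1 : a 1 = 0) (γ : Word n) :
    ENNReal.ofReal (bCoeff a γ) = ∑' m : ℕ, cfun (fun α => ENNReal.ofReal (a α)) m γ := by
  set A := fun α : Word n => ENNReal.ofReal (a α) with hA
  have hA1 : A 1 = 0 := by simp [hA, ha1]
  by_cases hγ : γ = 1
  · subst hγ
    rw [bCoeff, if_pos rfl, tsum_eq_single 0]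
    · simp [cfun]
    · intro m hm
      obtain ⟨k, rfl⟩ := Nat.exists_eq_succ_of_ne_zero hm
      rw [cfun]
      refine ENNReal.tsum_eq_zero.mpr fun p => ?_
      split_ifs with h
      · rw [mul_eq_one_word h, hA1, zero_mul]
      · rfl
  · rw [bCoeff, if_neg hγ, tsum_cfun_eq A hA1 γ]
    letI : Fintype {L : List (Word n) // L.prod = γ ∧ ∀ w ∈ L, w ≠ 1} :=
      @Fintype.ofFinite _ (fact_finite γ)
    rw [tsum_fintype, tsum_fintype, ENNReal.ofReal_sum_of_nonneg]
    · exact Finset.sum_congr rfl fun L _ => ofReal_list_prod a ha L.1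
    · intro L _
      refine List.prod_nonneg ?_
      intro y hy
      obtain ⟨α, -, rfl⟩ := List.mem_map.mp hy
      exact ha α

end Comb

section Main

local notation "⟪" x ", " y "⟫" => @inner ℂ _ _ x y

/-- for `T ∈ D_f(H)` (i.e. `Φ_{f,T}(I) ≤ I`), the sequence `Φ_{f,T}^m(I)` is
decreasing, the limit `Q = SOT-lim_m Φ_{f,T}^m(I)` exists, and
`Σ_β b_β T_β (I − Φ_{f,T}(I)) T_β* = I − Q` in the strong operator topology. -/
theorem phi_iterates_decrease_and_limit {n : ℕ} {H : Type*} [NormedAddCommGroup H]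
    [InnerProductSpace ℂ H] [CompleteSpace H]
    (a : Word n → ℝ) (hreg : PosRegular a)
    (T : Fin n → H →L[ℂ] H) (Φ : (H →L[ℂ] H) → (H →L[ℂ] H))
    (hΦ : IsPhi a T Φ)
    (hdom : ((1 : H →L[ℂ] H) - Φ 1).IsPositive) :
    (∀ m : ℕ, (Φ^[m] 1 - Φ^[m + 1] 1).IsPositive) ∧
    ∃ Q : H →L[ℂ] H,
      (∀ x : H, Tendsto (fun m => (Φ^[m] 1) x) atTop (𝓝 (Q x))) ∧
      ∀ x : H,
        HasSum (fun β : Word n =>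
            (bCoeff a β : ℂ) •
              opWord T β (((1 : H →L[ℂ] H) - Φ 1) ((opWord T β).adjoint x)))
          (x - Q x) := by
  obtain ⟨ha1, ha, -, -⟩ := hreg
  set S : H →L[ℂ] H := 1 - Φ 1 with hSdef
  have hS : S.IsPositive := hdom
  have hSnn : ∀ w : H, (0 : ℝ) ≤ Complex.re ⟪S w, w⟫ := fun w => hS.2 w
  set P : ℕ → H →L[ℂ] H := fun m => Φ^[m] 1 with hPdef
  have hP0 : P 0 = 1 := rfl
  have hPsucc : ∀ m, P (m + 1) = Φ (P m) := fun m => Function.iterate_succ_apply' Φ m 1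
  have hPpos : ∀ m, (P m).IsPositive := by
    intro m
    induction m with
    | zero => exact ContinuousLinearMap.isPositive_one
    | succ m ih =>
      rw [hPsucc]
      exact phi_isPositive hΦ ha ih
  have hDpos : ∀ m, (P m - P (m + 1)).IsPositive := by
    intro m
    induction m with
    | zero =>
      have h1 : P 1 = Φ 1 := by rw [hPsucc 0, hP0]
      rw [hP0, h1]
      exact hdom
    | succ m ih =>
      have h2 := phi_mono hΦ ha ih
      rw [← hPsucc m, ← hPsucc (m + 1)] at h2
      exact h2
  have hrsub : ∀ m (x : H), Complex.re ⟪(P m - P (m + 1)) x, x⟫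
      = Complex.re ⟪P m x, x⟫ - Complex.re ⟪P (m + 1) x, x⟫ := by
    intro m x
    rw [ContinuousLinearMap.sub_apply, inner_sub_left, Complex.sub_re]
  have hr_anti : ∀ x : H, Antitone fun m => Complex.re ⟪P m x, x⟫ := by
    intro x
    refine antitone_nat_of_succ_le fun m => ?_
    have h1 : (0 : ℝ) ≤ Complex.re ⟪(P m - P (m + 1)) x, x⟫ := (hDpos m).2 x
    rw [hrsub] at h1
    linarith
  have hr0 : ∀ x : H, Complex.re ⟪P 0 x, x⟫ = ‖x‖ ^ 2 := by
    intro x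
    rw [hP0]
    have : ((1 : H →L[ℂ] H)) x = x := rfl
    rw [this]
    simpa using inner_self_eq_norm_sq (𝕜 := ℂ) (x := x)
  have hr_nonneg : ∀ m (x : H), 0 ≤ Complex.re ⟪P m x, x⟫ := fun m x => (hPpos m).2 x
  have hr_le : ∀ m (x : H), Complex.re ⟪P m x, x⟫ ≤ ‖x‖ ^ 2 := by
    intro m x
    have h1 := hr_anti x (Nat.zero_le m)
    simp only at h1
    rw [hr0 x] at h1
    exact h1
  have hPk_pos : ∀ k m, k ≤ m → (P k - P m).IsPositive := by
    intro k m hkm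
    induction m, hkm using Nat.le_induction with
    | base =>
      rw [sub_self]
      exact ContinuousLinearMap.isPositive_zero
    | succ m hkm ih =>
      have heq : P k - P (m + 1) = (P k - P m) + (P m - P (m + 1)) :=
        (sub_add_sub_cancel (P k) (P m) (P (m + 1))).symm
      rw [heq]
      exact ih.add (hDpos m)
  have hPk_le : ∀ k m, k ≤ m → ∀ y : H, Complex.re ⟪(P k - P m) y, y⟫ ≤ ‖y‖ ^ 2 := by
    intro k m hkm y
    have heq : Complex.re ⟪(P k - P m) y, y⟫
        = Complex.re ⟪P k y, y⟫ - Complex.re ⟪P m y, y⟫ := by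
      rw [ContinuousLinearMap.sub_apply, inner_sub_left, Complex.sub_re]
    rw [heq]
    have := hr_nonneg m y
    have := hr_le k y
    linarith
  -- convergence of the iterates
  have hrCauchy : ∀ x : H, CauchySeq fun m => Complex.re ⟪P m x, x⟫ := by
    intro x
    have hbdd : BddBelow (Set.range fun m => Complex.re ⟪P m x, x⟫) := by
      refine ⟨0, ?_⟩
      rintro y ⟨m, rfl⟩
      exact hr_nonneg m x
    exact (tendsto_atTop_ciInf (hr_anti x) hbdd).cauchySeq
  have hPCauchy : ∀ x : H, CauchySeq fun m => P m x := by
    intro x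
    rw [Metric.cauchySeq_iff']
    intro ε hε
    obtain ⟨N, hN⟩ := Metric.cauchySeq_iff'.mp (hrCauchy x) (ε ^ 2) (by positivity)
    refine ⟨N, fun m hm => ?_⟩
    have hcs := cs_bound (hPk_pos N m hm) (hPk_le N m hm) x
    have h1 : ‖P m x - P N x‖ = ‖(P N - P m) x‖ := by
      rw [ContinuousLinearMap.sub_apply, norm_sub_rev]
    have hrr : Complex.re ⟪(P N - P m) x, x⟫
        = Complex.re ⟪P N x, x⟫ - Complex.re ⟪P m x, x⟫ := by
      rw [ContinuousLinearMap.sub_apply, inner_sub_left, Complex.sub_re]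
    have hd := hN m hm
    rw [Real.dist_eq] at hd
    have habs : Complex.re ⟪P N x, x⟫ - Complex.re ⟪P m x, x⟫ < ε ^ 2 := by
      have h2 := (abs_lt.mp hd).1
      linarith
    rw [dist_eq_norm, h1]
    nlinarith [norm_nonneg ((P N - P m) x), hrr, hcs]
  have hQex : ∀ x : H, ∃ l, Tendsto (fun m => P m x) atTop (𝓝 l) := fun x =>
    cauchySeq_tendsto_of_complete (hPCauchy x)
  choose Qf hQf using hQex
  have hQadd : ∀ x y : H, Qf (x + y) = Qf x + Qf y := by
    intro x y
    refine tendsto_nhds_unique (hQf (x + y)) ?_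
    have h := (hQf x).add (hQf y)
    exact h.congr fun m => (map_add (P m) x y).symm
  have hQsmul : ∀ (c : ℂ) (x : H), Qf (c • x) = c • Qf x := by
    intro c x
    refine tendsto_nhds_unique (hQf (c • x)) ?_
    have h := (hQf x).const_smul c
    exact h.congr fun m => (map_smul (P m) c x).symm
  have hQnorm : ∀ x : H, ‖Qf x‖ ≤ 1 * ‖x‖ := by
    intro x
    rw [one_mul]
    refine le_of_tendsto (hQf x).norm (Filter.Eventually.of_forall fun m => ?_)
    have hcs := cs_bound (hPpos m) (fun y => hr_le m y) x
    nlinarith [norm_nonneg (P m x), norm_nonneg x, hr_le m x]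
  let Q : H →L[ℂ] H := LinearMap.mkContinuous
    { toFun := Qf, map_add' := hQadd, map_smul' := hQsmul } 1 hQnorm
  have hQapp : ∀ x, Q x = Qf x := fun _ => rfl
  have hρ : ∀ x : H, Tendsto (fun m => Complex.re ⟪P m x, x⟫) atTop
      (𝓝 (Complex.re ⟪Q x, x⟫)) := by
    intro x
    have h1 : Tendsto (fun m => (⟪P m x, x⟫ : ℂ)) atTop (𝓝 ⟪Q x, x⟫) := by
      rw [hQapp]
      exact (hQf x).inner tendsto_const_nhds
    exact (Complex.continuous_re.tendsto _).comp h1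
  have hρ_nonneg : ∀ x : H, 0 ≤ Complex.re ⟪Q x, x⟫ := fun x =>
    ge_of_tendsto (hρ x) (Filter.Eventually.of_forall fun m => hr_nonneg m x)
  have hρ_le : ∀ x : H, Complex.re ⟪Q x, x⟫ ≤ ‖x‖ ^ 2 := fun x =>
    le_of_tendsto (hρ x) (Filter.Eventually.of_forall fun m => hr_le m x)
  have hQreal : ∀ x : H, ⟪Q x, x⟫ = ((Complex.re ⟪Q x, x⟫ : ℝ) : ℂ) := by
    intro x
    have h1 : Tendsto (fun m => (⟪P m x, x⟫ : ℂ)) atTop (𝓝 ⟪Q x, x⟫) := by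
      rw [hQapp]
      exact (hQf x).inner tendsto_const_nhds
    have him := (Complex.continuous_im.tendsto _).comp h1
    have hzero : ∀ m, (⟪P m x, x⟫ : ℂ).im = 0 := by
      intro m
      have h2 := ((ContinuousLinearMap.isPositive_iff_complex (P m)).mp (hPpos m) x).1
      rw [← h2]
      simp
    have him' : Tendsto (fun _ : ℕ => (0 : ℝ)) atTop (𝓝 ((⟪Q x, x⟫ : ℂ).im)) :=
      him.congr hzero
    have him0 : (⟪Q x, x⟫ : ℂ).im = 0 := tendsto_nhds_unique him' tendsto_const_nhds
    apply Complex.ext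
    · simp
    · simp [him0]
  -- the ENNReal coefficient machinery
  set A : Word n → ℝ≥0∞ := fun α => ENNReal.ofReal (a α) with hAdef
  set sE : H → Word n → ℝ≥0∞ := fun x β =>
    ENNReal.ofReal (Complex.re ⟪S ((opWord T β).adjoint x), (opWord T β).adjoint x⟫) with hsEdef
  have hE1 : ∀ X : H →L[ℂ] H, X.IsPositive → ∀ x : H,
      ENNReal.ofReal (Complex.re ⟪Φ X x, x⟫)
        = ∑' α : Word n, A α * ENNReal.ofReal
            (Complex.re ⟪X ((opWord T α).adjoint x), (opWord T α).adjoint x⟫) := by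
    intro X hX x
    have h := Complex.hasSum_re (phi_hasSum hΦ X x x)
    simp only [Complex.re_ofReal_mul] at h
    have hnn : ∀ α : {β : Word n // β ≠ 1},
        0 ≤ a α.1 * Complex.re ⟪X ((opWord T α.1).adjoint x), (opWord T α.1).adjoint x⟫ :=
      fun α => mul_nonneg (ha _) (hX.2 _)
    rw [← h.tsum_eq, ENNReal.ofReal_tsum_of_nonneg hnn h.summable]
    have hsupp : Function.support (fun α : Word n => A α * ENNReal.ofReal
        (Complex.re ⟪X ((opWord T α).adjoint x), (opWord T α).adjoint x⟫))
        ⊆ Set.range (Subtype.val : {β : Word n // β ≠ 1} → Word n) := by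
      intro α hα
      by_cases h1 : α = 1
      · exfalso
        apply hα
        rw [h1]
        simp [hAdef, ha1]
      · exact ⟨⟨α, h1⟩, rfl⟩
    rw [← Subtype.val_injective.tsum_eq hsupp]
    exact tsum_congr fun α => ENNReal.ofReal_mul (ha _)
  have hΦD : ∀ m, Φ (P m - P (m + 1)) = P (m + 1) - P (m + 1 + 1) := by
    intro m
    rw [phi_sub hΦ, ← hPsucc m, ← hPsucc (m + 1)]
  have hone_adj : (1 : H →L[ℂ] H).adjoint = 1 := by
    rw [ContinuousLinearMap.one_def, ContinuousLinearMap.adjoint_id]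
  have hG : ∀ m, ∀ x : H, ENNReal.ofReal (Complex.re ⟪(P m - P (m + 1)) x, x⟫)
      = ∑' γ : Word n, cfun A m γ * sE x γ := by
    intro m
    induction m with
    | zero =>
      intro x
      have hL : P 0 - P 1 = S := by
        rw [hP0, hPsucc 0, hP0, hSdef]
      rw [hL, tsum_eq_single 1]
      · rw [cfun, if_pos rfl, one_mul, hsEdef]
        simp only [opWord_one, hone_adj, ContinuousLinearMap.one_apply]
      · intro γ hγ
        rw [cfun, if_neg hγ, zero_mul]
    | succ m ih =>
      intro x
      rw [← hΦD m, hE1 (P m - P (m + 1)) (hDpos m) x]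
      calc ∑' α : Word n, A α * ENNReal.ofReal
            (Complex.re ⟪(P m - P (m + 1)) ((opWord T α).adjoint x), (opWord T α).adjoint x⟫)
          = ∑' α : Word n, A α * ∑' γ : Word n, cfun A m γ * sE ((opWord T α).adjoint x) γ :=
            tsum_congr fun α => by rw [ih ((opWord T α).adjoint x)]
        _ = ∑' (α : Word n) (γ : Word n), A α * cfun A m γ * sE x (α * γ) := by
            refine tsum_congr fun α => ?_
            rw [← ENNReal.tsum_mul_left]
            refine tsum_congr fun γ => ?_
            have hsE : sE ((opWord T α).adjoint x) γ = sE x (α * γ) := by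
              rw [hsEdef]
              simp only [adjoint_opWord_mul]
            rw [hsE, mul_assoc]
        _ = ∑' p : Word n × Word n, A p.1 * cfun A m p.2 * sE x (p.1 * p.2) :=
            (ENNReal.tsum_prod (f := fun α γ => A α * cfun A m γ * sE x (α * γ))).symm
        _ = ∑' (p : Word n × Word n) (δ : Word n),
              if p.1 * p.2 = δ then A p.1 * cfun A m p.2 * sE x δ else 0 := by
            refine tsum_congr fun p => ?_
            rw [tsum_eq_single (p.1 * p.2)]
            · rw [if_pos rfl]
            · intro δ hδ
              rw [if_neg (fun h => hδ h.symm)]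
        _ = ∑' (δ : Word n) (p : Word n × Word n),
              if p.1 * p.2 = δ then A p.1 * cfun A m p.2 * sE x δ else 0 :=
            ENNReal.tsum_comm (f := fun (p : Word n × Word n) (δ : Word n) =>
              if p.1 * p.2 = δ then A p.1 * cfun A m p.2 * sE x δ else 0)
        _ = ∑' δ : Word n, cfun A (m + 1) δ * sE x δ := by
            refine tsum_congr fun δ => ?_
            rw [cfun, ← ENNReal.tsum_mul_right]
            refine tsum_congr fun p => ?_
            rw [ite_mul, zero_mul]
        _ = ∑' γ : Word n, cfun A (m + 1) γ * sE x γ := rfl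
  have htel : ∀ x : H, HasSum
      (fun m => Complex.re ⟪P m x, x⟫ - Complex.re ⟪P (m + 1) x, x⟫)
      (‖x‖ ^ 2 - Complex.re ⟪Q x, x⟫) := by
    intro x
    rw [hasSum_iff_tendsto_nat_of_nonneg (fun m => by linarith [hr_anti x (Nat.le_succ m)])]
    have hps : ∀ N : ℕ, ∑ m ∈ Finset.range N,
        (Complex.re ⟪P m x, x⟫ - Complex.re ⟪P (m + 1) x, x⟫)
        = Complex.re ⟪P 0 x, x⟫ - Complex.re ⟪P N x, x⟫ := fun N =>
      Finset.sum_range_sub' (fun m => Complex.re ⟪P m x, x⟫) N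
    have h2 : Tendsto (fun N => ‖x‖ ^ 2 - Complex.re ⟪P N x, x⟫) atTop
        (𝓝 (‖x‖ ^ 2 - Complex.re ⟪Q x, x⟫)) :=
      tendsto_const_nhds.sub (hρ x)
    exact h2.congr fun N => by rw [hps N, hr0 x]
  have hscalE : ∀ x : H, ENNReal.ofReal (‖x‖ ^ 2 - Complex.re ⟪Q x, x⟫)
      = ∑' γ : Word n, ENNReal.ofReal (bCoeff a γ) * sE x γ := by
    intro x
    have hnn : ∀ m : ℕ, 0 ≤ Complex.re ⟪P m x, x⟫ - Complex.re ⟪P (m + 1) x, x⟫ :=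
      fun m => by linarith [hr_anti x (Nat.le_succ m)]
    calc ENNReal.ofReal (‖x‖ ^ 2 - Complex.re ⟪Q x, x⟫)
        = ∑' m : ℕ, ENNReal.ofReal
            (Complex.re ⟪P m x, x⟫ - Complex.re ⟪P (m + 1) x, x⟫) := by
          rw [← (htel x).tsum_eq]
          exact ENNReal.ofReal_tsum_of_nonneg hnn (htel x).summable
      _ = ∑' (m : ℕ) (γ : Word n), cfun A m γ * sE x γ := by
          refine tsum_congr fun m => ?_
          rw [← hG m x, hrsub m x]
      _ = ∑' (γ : Word n) (m : ℕ), cfun A m γ * sE x γ :=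
          ENNReal.tsum_comm (f := fun m γ => cfun A m γ * sE x γ)
      _ = ∑' γ : Word n, ENNReal.ofReal (bCoeff a γ) * sE x γ := by
          refine tsum_congr fun γ => ?_
          rw [ENNReal.tsum_mul_right, ← ofReal_bCoeff a ha ha1 γ]
  have hsummf : ∀ x : H, HasSum (fun γ : Word n => bCoeff a γ *
      Complex.re ⟪S ((opWord T γ).adjoint x), (opWord T γ).adjoint x⟫)
      (‖x‖ ^ 2 - Complex.re ⟪Q x, x⟫) := by
    intro x
    set f : Word n → ℝ := fun γ => bCoeff a γ *
      Complex.re ⟪S ((opWord T γ).adjoint x), (opWord T γ).adjoint x⟫ with hfdef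
    have hfnn : ∀ γ, 0 ≤ f γ := fun γ =>
      mul_nonneg (bCoeff_nonneg a ha γ) (hS.2 _)
    have hofReal : ∀ γ, ENNReal.ofReal (f γ)
        = ENNReal.ofReal (bCoeff a γ) * sE x γ := fun γ =>
      ENNReal.ofReal_mul (bCoeff_nonneg a ha γ)
    have hR : 0 ≤ ‖x‖ ^ 2 - Complex.re ⟪Q x, x⟫ := by linarith [hρ_le x]
    have htot : ∑' γ : Word n, ENNReal.ofReal (f γ)
        = ENNReal.ofReal (‖x‖ ^ 2 - Complex.re ⟪Q x, x⟫) := by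
      rw [tsum_congr hofReal, ← hscalE x]
    have hne : ∑' γ : Word n, ENNReal.ofReal (f γ) ≠ ⊤ := by
      rw [htot]
      exact ENNReal.ofReal_ne_top
    have hsum : Summable f := by
      have h1 : Summable fun γ => Real.toNNReal (f γ) :=
        ENNReal.tsum_coe_ne_top_iff_summable.mp hne
      have h2 := NNReal.summable_coe.mpr h1
      exact h2.congr fun γ => Real.coe_toNNReal _ (hfnn γ)
    have heq : ∑' γ, f γ = ‖x‖ ^ 2 - Complex.re ⟪Q x, x⟫ := by
      have h3 := ENNReal.ofReal_tsum_of_nonneg hfnn hsum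
      rw [htot] at h3
      exact (ENNReal.ofReal_eq_ofReal_iff (tsum_nonneg hfnn) hR).mp h3
    exact heq ▸ hsum.hasSum
  -- the vector-valued sum
  set B : Word n → H →L[ℂ] H := fun γ =>
    (bCoeff a γ : ℂ) • (opWord T γ ∘L S ∘L (opWord T γ).adjoint) with hBdef
  have hBapp : ∀ γ (x : H), B γ x
      = (bCoeff a γ : ℂ) • opWord T γ (S ((opWord T γ).adjoint x)) := fun γ x => rfl
  have hBpos : ∀ γ, (B γ).IsPositive := by
    intro γ
    have hbase := hS.conj_adjoint (opWord T γ)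
    constructor
    · refine ContinuousLinearMap.isSelfAdjoint_iff_isSymmetric.mp (IsSelfAdjoint.smul ?_ (ContinuousLinearMap.isSelfAdjoint_iff_isSymmetric.mpr hbase.1))
      exact Complex.conj_ofReal _
    · intro y
      have h1 : (0 : ℝ) ≤ Complex.re ⟪(opWord T γ ∘L S ∘L (opWord T γ).adjoint) y, y⟫ :=
        hbase.2 y
      show (0 : ℝ) ≤ Complex.re ⟪B γ y, y⟫
      rw [hBdef]
      simp only [ContinuousLinearMap.smul_apply, inner_smul_left, Complex.conj_ofReal,
        Complex.re_ofReal_mul]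
      exact mul_nonneg (bCoeff_nonneg a ha γ) h1
  have hSreal : ∀ w : H, (⟪S w, w⟫ : ℂ) = ((Complex.re ⟪S w, w⟫ : ℝ) : ℂ) := by
    intro w
    have hsymS := hS.1
    have hconj : conj (⟪S w, w⟫ : ℂ) = ⟪S w, w⟫ := by
      rw [inner_conj_symm]
      exact (hsymS w w).symm
    have him : (⟪S w, w⟫ : ℂ).im = 0 := by
      have h3 := congrArg Complex.im hconj
      rw [Complex.conj_im] at h3
      linarith
    apply Complex.ext <;> simp [him]
  have hBinner : ∀ γ (x : H), ⟪B γ x, x⟫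
      = ((bCoeff a γ * Complex.re ⟪S ((opWord T γ).adjoint x), (opWord T γ).adjoint x⟫ : ℝ) : ℂ) := by
    intro γ x
    calc ⟪B γ x, x⟫
        = (bCoeff a γ : ℂ) * ⟪opWord T γ (S ((opWord T γ).adjoint x)), x⟫ := by
          rw [hBapp, inner_smul_left, Complex.conj_ofReal]
      _ = (bCoeff a γ : ℂ) * ⟪S ((opWord T γ).adjoint x), (opWord T γ).adjoint x⟫ := by
          rw [← ContinuousLinearMap.adjoint_inner_right]
      _ = ((bCoeff a γ * Complex.re ⟪S ((opWord T γ).adjoint x), (opWord T γ).adjoint x⟫ : ℝ) : ℂ) := by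
          rw [Complex.ofReal_mul, ← hSreal]
  have hFsum : ∀ F : Finset (Word n), (∑ γ ∈ F, B γ).IsPositive := by
    intro F
    exact Finset.sum_induction B _ (fun u v hu hv => hu.add hv)
      ContinuousLinearMap.isPositive_zero fun γ _ => hBpos γ
  have hFinner : ∀ (F : Finset (Word n)) (y : H), Complex.re ⟪(∑ γ ∈ F, B γ) y, y⟫
      = ∑ γ ∈ F, bCoeff a γ *
          Complex.re ⟪S ((opWord T γ).adjoint y), (opWord T γ).adjoint y⟫ := by
    intro F y
    rw [ContinuousLinearMap.sum_apply, sum_inner, Complex.re_sum]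
    refine Finset.sum_congr rfl fun γ _ => ?_
    rw [hBinner]
    simp
  have hFle : ∀ (F : Finset (Word n)) (y : H),
      Complex.re ⟪(∑ γ ∈ F, B γ) y, y⟫ ≤ ‖y‖ ^ 2 := by
    intro F y
    rw [hFinner]
    have h1 := sum_le_hasSum F
      (fun γ _ => mul_nonneg (bCoeff_nonneg a ha γ) (hSnn _)) (hsummf y)
    have := hρ_nonneg y
    linarith
  have hu_summable : ∀ x : H, Summable fun γ : Word n => B γ x := by
    intro x
    rw [summable_iff_vanishing]
    intro e he
    obtain ⟨ε, hε, hball⟩ := Metric.mem_nhds_iff.mp he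
    obtain ⟨s, hs⟩ := summable_iff_vanishing.mp (hsummf x).summable
      (Metric.ball 0 (ε ^ 2)) (Metric.ball_mem_nhds 0 (by positivity))
    refine ⟨s, fun t ht => hball ?_⟩
    have h2 := hs t ht
    rw [Metric.mem_ball, dist_zero_right, Real.norm_eq_abs] at h2
    have hsum_eq : ∑ γ ∈ t, B γ x = (∑ γ ∈ t, B γ) x :=
      (ContinuousLinearMap.sum_apply t B x).symm
    have hcs := cs_bound (hFsum t) (hFle t) x
    rw [hFinner t x] at hcs
    have habs : ∑ γ ∈ t, bCoeff a γ *
        Complex.re ⟪S ((opWord T γ).adjoint x), (opWord T γ).adjoint x⟫ < ε ^ 2 :=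
      lt_of_le_of_lt (le_abs_self _) h2
    rw [Metric.mem_ball, dist_zero_right, hsum_eq]
    nlinarith [norm_nonneg ((∑ γ ∈ t, B γ) x), hcs, habs, hε]
  have hvsum : ∀ x : H, HasSum (fun γ => B γ x) (∑' γ, B γ x) := fun x =>
    (hu_summable x).hasSum
  have hinner_sum : ∀ x : H, ⟪∑' γ : Word n, B γ x, x⟫
      = ((‖x‖ ^ 2 - Complex.re ⟪Q x, x⟫ : ℝ) : ℂ) := by
    intro x
    have h1 := (hvsum x).mapL ((innerSL ℂ (E := H)).flip x)
    have h1' : HasSum (fun γ : Word n => ⟪B γ x, x⟫) ⟪∑' γ : Word n, B γ x, x⟫ := h1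
    have h2 := (hsummf x).mapL Complex.ofRealCLM
    have h2' : HasSum (fun γ : Word n => ⟪B γ x, x⟫)
        ((‖x‖ ^ 2 - Complex.re ⟪Q x, x⟫ : ℝ) : ℂ) := by
      simp only [Complex.ofRealCLM_apply] at h2
      exact (funext fun γ => (hBinner γ x).symm) ▸ h2
    exact h1'.unique h2'
  have hQxx : ∀ x : H, ⟪x - Q x, x⟫ = ((‖x‖ ^ 2 - Complex.re ⟪Q x, x⟫ : ℝ) : ℂ) := by
    intro x
    rw [inner_sub_left, hQreal x]
    have hxx : (⟪x, x⟫ : ℂ) = ((‖x‖ ^ 2 : ℝ) : ℂ) := by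
      rw [inner_self_eq_norm_sq_to_K]
      norm_cast
    rw [hxx]
    simp
  have hvadd : ∀ x y : H, (∑' γ : Word n, B γ (x + y))
      = (∑' γ : Word n, B γ x) + ∑' γ : Word n, B γ y := by
    intro x y
    have h := (hvsum x).add (hvsum y)
    have e : (fun γ : Word n => B γ x + B γ y) = fun γ : Word n => B γ (x + y) :=
      funext fun γ => (map_add (B γ) x y).symm
    exact (e ▸ h).tsum_eq
  have hvsmul : ∀ (c : ℂ) (x : H), (∑' γ : Word n, B γ (c • x)) = c • ∑' γ : Word n, B γ x := by
    intro c x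
    have h := (hvsum x).const_smul c
    have e : (fun γ : Word n => c • B γ x) = fun γ : Word n => B γ (c • x) :=
      funext fun γ => (map_smul (B γ) c x).symm
    exact (e ▸ h).tsum_eq
  let Elin : H →ₗ[ℂ] H :=
    { toFun := fun x => (x - Q x) - ∑' γ : Word n, B γ x
      map_add' := by
        intro x y
        rw [hvadd, map_add]
        abel
      map_smul' := by
        intro c x
        rw [hvsmul, map_smul]
        simp [smul_sub] }
  have hE0 : ∀ x, ⟪Elin x, x⟫ = 0 := by
    intro x
    show ⟪(x - Q x) - ∑' γ : Word n, B γ x, x⟫ = 0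
    rw [inner_sub_left, hinner_sum x, hQxx x, sub_self]
  have hEzero := (inner_map_self_eq_zero Elin).mp hE0
  have hvx : ∀ x : H, (∑' γ : Word n, B γ x) = x - Q x := by
    intro x
    have h' : (x - Q x) - ∑' γ : Word n, B γ x = 0 := DFunLike.congr_fun hEzero x
    exact (sub_eq_zero.mp h').symm
  refine ⟨fun m => hDpos m, Q, fun x => hQf x, fun x => ?_⟩
  have hfinal := hvsum x
  rw [hvx x] at hfinal
  exact hfinal

end Main

end NCDomain
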